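/- Let κ ∈ (-1,1) and define M(α) = (e^{2iα} + κ)/(1 + κe^{2iα}) for α ∈ ℝ; M never vanishes, so integer powers M(α)^q are defined for all q ∈ ℤ. For q ∈ ℤ set h_q(α) = e^{iα}·(M(α)^q - κ·M(α)^{q+1}). Then: if q ≥ 0, ∫₀^{2π} h_q(α) e^{-inα} dα = 0 for every integer n ≤ 0 (h_q is a strictly holomorphic Fourier series in e^{iα}); and if q ≤ -1, ∫₀^{2π} h_q(α) e^{-inα} dα = 0 for every integer n ≥ 0 (h_q is a strictly antiholomorphic Fourier series in e^{iα}). -/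

import Mathlib

open Real Complex intervalIntegral

/-- The boundary function `M(α) = (e^{2iα} + κ)/(1 + κ e^{2iα})`. -/
noncomputable def Mfun (κ : ℝ) (α : ℝ) : ℂ :=
  (Complex.exp (2 * Complex.I * α) + κ) / (1 + κ * Complex.exp (2 * Complex.I * α))

/-- `h_q(α) = e^{iα} (M(α)^q - κ M(α)^{q+1})` for `q : ℤ`. -/
noncomputable def hfun (κ : ℝ) (q : ℤ) (α : ℝ) : ℂ :=
  Complex.exp (Complex.I * α) * (Mfun κ α ^ q - κ * Mfun κ α ^ (q + 1))

lemma den_ne_zero {κ : ℝ} (hκ : |κ| < 1) {z : ℂ} (hz : ‖z‖ ≤ 1) :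
    (1 : ℂ) + κ * z ^ 2 ≠ 0 := by
  intro h
  have h1 : (κ : ℂ) * z ^ 2 = -1 := by linear_combination h
  have := congrArg (‖·‖) h1
  simp [map_mul, map_pow] at this
  have h2 : ‖z‖ ^ 2 ≤ 1 := pow_le_one₀ (norm_nonneg z) hz
  nlinarith [abs_nonneg κ]

lemma key_integral (κ : ℝ) (hκ : |κ| < 1) (p m : ℕ) :
    ∫ θ in (0:ℝ)..(2*π),
      Complex.exp (Complex.I * θ) ^ (m + 1) * (Complex.exp (Complex.I * θ) ^ 2 + κ) ^ p /
        (1 + κ * Complex.exp (Complex.I * θ) ^ 2) ^ (p + 1) = 0 := by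
  set f : ℂ → ℂ := fun z => z ^ m * (z ^ 2 + κ) ^ p / (1 + κ * z ^ 2) ^ (p + 1) with hf
  have hdiff : ∀ z ∈ Metric.closedBall (0:ℂ) 1, DifferentiableAt ℂ f z := by
    intro z hz
    simp only [Metric.mem_closedBall, dist_zero_right] at hz
    have hden : (1 : ℂ) + κ * z ^ 2 ≠ 0 := den_ne_zero hκ hz
    apply DifferentiableAt.div
    · exact (differentiableAt_pow m).mul (((differentiableAt_pow 2).add_const _).pow p)
    · exact ((differentiableAt_const _).add ((differentiableAt_const _).mul
        (differentiableAt_pow 2))).pow _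
    · exact pow_ne_zero _ hden
  have hzero : (∮ z in C((0:ℂ), 1), f z) = 0 := by
    apply circleIntegral_eq_zero_of_differentiable_on_off_countable zero_le_one
      Set.countable_empty
    · exact fun z hz => (hdiff z hz).continuousAt.continuousWithinAt
    · exact fun z hz => hdiff z (Metric.ball_subset_closedBall hz.1)
  rw [circleIntegral] at hzero
  simp only [deriv_circleMap, circleMap, ofReal_one, one_mul, zero_add, smul_eq_mul] at hzero
  have : ∫ θ in (0:ℝ)..(2*π),
      Complex.exp (Complex.I * θ) ^ (m + 1) * (Complex.exp (Complex.I * θ) ^ 2 + κ) ^ p /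
        (1 + κ * Complex.exp (Complex.I * θ) ^ 2) ^ (p + 1)
      = Complex.I⁻¹ * ∫ θ in (0:ℝ)..(2*π),
        Complex.exp (↑θ * Complex.I) * Complex.I * f (Complex.exp (↑θ * Complex.I)) := by
    rw [← intervalIntegral.integral_const_mul]
    apply intervalIntegral.integral_congr
    intro θ _
    have hI : Complex.I ≠ 0 := Complex.I_ne_zero
    rw [hf]
    simp only [mul_comm Complex.I (θ:ℂ)]
    have hII : Complex.I⁻¹ * Complex.I = 1 := inv_mul_cancel₀ hI
    linear_combination (-(Complex.exp (↑θ * Complex.I) * (Complex.exp (↑θ * Complex.I) ^ m *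
      (Complex.exp (↑θ * Complex.I) ^ 2 + (κ:ℂ)) ^ p /
      (1 + (κ:ℂ) * Complex.exp (↑θ * Complex.I) ^ 2) ^ (p + 1)))) * hII
  rw [this, hzero, mul_zero]

lemma key_integral' (κ : ℝ) (hκ : |κ| < 1) (p m : ℕ) :
    ∫ θ in (0:ℝ)..(2*π),
      Complex.exp (-Complex.I * θ) ^ (m + 1) * (Complex.exp (-Complex.I * θ) ^ 2 + κ) ^ p /
        (1 + κ * Complex.exp (-Complex.I * θ) ^ 2) ^ (p + 1) = 0 := by
  have h := key_integral κ hκ p m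
  set F : ℝ → ℂ := fun θ =>
    Complex.exp (Complex.I * θ) ^ (m + 1) * (Complex.exp (Complex.I * θ) ^ 2 + κ) ^ p /
      (1 + κ * Complex.exp (Complex.I * θ) ^ 2) ^ (p + 1) with hF
  have h2 : ∫ θ in (0:ℝ)..(2*π), F (2*π - θ) = ∫ θ in (0:ℝ)..(2*π), F θ := by
    rw [intervalIntegral.integral_comp_sub_left F (2*π)]
    norm_num
  have h3 : ∀ θ : ℝ, F (2*π - θ) = Complex.exp (-Complex.I * θ) ^ (m + 1) *
      (Complex.exp (-Complex.I * θ) ^ 2 + κ) ^ p /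
      (1 + κ * Complex.exp (-Complex.I * θ) ^ 2) ^ (p + 1) := by
    intro θ
    have he : Complex.exp (Complex.I * ((2*π - θ : ℝ) : ℂ)) = Complex.exp (-Complex.I * θ) := by
      push_cast
      rw [show Complex.I * (2*π - θ) = 2*π*Complex.I + (-Complex.I * θ) by ring,
        Complex.exp_add, Complex.exp_two_pi_mul_I, one_mul]
    rw [hF]
    simp only [he]
  rw [← intervalIntegral.integral_congr (fun θ _ => h3 θ), h2]
  exact h

lemma num_ne_zero {κ : ℝ} (hκ : |κ| < 1) {z : ℂ} (hz : ‖z‖ = 1) :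
    z ^ 2 + (κ : ℂ) ≠ 0 := by
  intro h
  have h1 : z ^ 2 = -(κ:ℂ) := by linear_combination h
  have := congrArg (‖·‖) h1
  simp [map_pow, hz] at this
  rw [← this] at hκ
  exact absurd hκ (lt_irrefl 1)

lemma exp_two (α : ℝ) : Complex.exp (2 * Complex.I * α) = Complex.exp (Complex.I * α) ^ 2 := by
  rw [← Complex.exp_nat_mul]
  push_cast
  ring_nf

/-- For `κ ∈ (-1,1)`: `M` never vanishes; for `q ≥ 0`, `h_q` is a strictly holomorphic Fourier
series in `e^{iα}` (all Fourier coefficients at frequencies `n ≤ 0` vanish); and for `q ≤ -1`,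
`h_q` is a strictly antiholomorphic Fourier series (all coefficients at `n ≥ 0` vanish). -/
theorem hfun_holomorphicity (κ : ℝ) (hκ : κ ∈ Set.Ioo (-1 : ℝ) 1) :
    (∀ α : ℝ, Mfun κ α ≠ 0) ∧
    (∀ q : ℤ, 0 ≤ q → ∀ n : ℤ, n ≤ 0 →
      ∫ α in (0 : ℝ)..(2 * π), hfun κ q α * Complex.exp (-(n : ℂ) * α * Complex.I) = 0) ∧
    (∀ q : ℤ, q ≤ -1 → ∀ n : ℤ, 0 ≤ n →
      ∫ α in (0 : ℝ)..(2 * π), hfun κ q α * Complex.exp (-(n : ℂ) * α * Complex.I) = 0) := by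
  obtain ⟨hκ1, hκ2⟩ := hκ
  have hκa : |κ| < 1 := abs_lt.2 ⟨hκ1, hκ2⟩
  have habs1 : ∀ α : ℝ, ‖Complex.exp (Complex.I * α)‖ = 1 := by
    intro α; rw [Complex.norm_exp]; simp
  have hz : ∀ α : ℝ, Complex.exp (Complex.I * α) ≠ 0 := fun α => Complex.exp_ne_zero _
  have hD : ∀ α : ℝ, (1:ℂ) + κ * Complex.exp (Complex.I * α) ^ 2 ≠ 0 := by
    intro α
    exact den_ne_zero hκa (le_of_eq (habs1 α))
  have hA : ∀ α : ℝ, Complex.exp (Complex.I * α) ^ 2 + (κ:ℂ) ≠ 0 := by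
    intro α
    exact num_ne_zero hκa (habs1 α)
  refine ⟨?_, ?_, ?_⟩
  · intro α
    unfold Mfun
    rw [exp_two]
    exact div_ne_zero (hA α) (hD α)
  · intro q hq n hn
    set p : ℕ := q.toNat with hpdef
    have hp : (p : ℤ) = q := Int.toNat_of_nonneg hq
    set m : ℕ := (-n).toNat with hmdef
    have hm : (m : ℤ) = -n := Int.toNat_of_nonneg (by omega)
    have hpt : ∀ α : ℝ, hfun κ q α * Complex.exp (-(n : ℂ) * α * Complex.I)
        = (1 - (κ:ℂ)^2) * (Complex.exp (Complex.I * α) ^ (m + 1) *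
          (Complex.exp (Complex.I * α) ^ 2 + κ) ^ p /
          (1 + κ * Complex.exp (Complex.I * α) ^ 2) ^ (p + 1)) := by
      intro α
      have hm' : Complex.exp (-(n : ℂ) * α * Complex.I) = Complex.exp (Complex.I * α) ^ m := by
        rw [← Complex.exp_nat_mul]
        congr 1
        have : -(n : ℂ) = (m : ℂ) := by
          rw [show ((m:ℂ)) = ((m:ℤ):ℂ) by push_cast; ring, hm]; push_cast; ring
        rw [this]; ring
      unfold hfun Mfun
      rw [exp_two, hm']
      rw [show q = ((p:ℕ):ℤ) from hp.symm]
      rw [show ((p:ℕ):ℤ) + 1 = (((p+1:ℕ)):ℤ) by push_cast; ring]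
      rw [zpow_natCast, zpow_natCast]
      have h1 := hz α; have h2 := hD α
      have hDD : (1 + (κ:ℂ) * Complex.exp (Complex.I * α)^2) * (1 + (κ:ℂ) * Complex.exp (Complex.I * α)^2)⁻¹ = 1 := mul_inv_cancel₀ h2
      generalize hDg : 1 + (κ:ℂ) * Complex.exp (Complex.I * α)^2 = D at *
      generalize hAg : Complex.exp (Complex.I * α)^2 + (κ:ℂ) = A at *
      linear_combination (-(Complex.exp (Complex.I * α)^(m+1)*A^p*D⁻¹^p)) * hDD - Complex.exp (Complex.I * α)^(m+1)*A^p*D⁻¹^p*D⁻¹ * hDg +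
        (κ:ℂ) * Complex.exp (Complex.I * α)^(m+1)*A^p*D⁻¹^p*D⁻¹ * hAg
    rw [intervalIntegral.integral_congr (fun α _ => hpt α),
      intervalIntegral.integral_const_mul, key_integral κ hκa p m, mul_zero]
  · intro q hq n hn
    set p : ℕ := (-q-1).toNat with hpdef
    have hp : (p : ℤ) = -q-1 := Int.toNat_of_nonneg (by omega)
    set m : ℕ := n.toNat with hmdef
    have hm : (m : ℤ) = n := Int.toNat_of_nonneg hn
    have hpt : ∀ α : ℝ, hfun κ q α * Complex.exp (-(n : ℂ) * α * Complex.I)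
        = (1 - (κ:ℂ)^2) * (Complex.exp (-Complex.I * α) ^ (m + 1) *
          (Complex.exp (-Complex.I * α) ^ 2 + κ) ^ p /
          (1 + κ * Complex.exp (-Complex.I * α) ^ 2) ^ (p + 1)) := by
      intro α
      have hw : Complex.exp (-Complex.I * α) = (Complex.exp (Complex.I * α))⁻¹ := by
        rw [← Complex.exp_neg]; ring_nf
      have hm' : Complex.exp (-(n : ℂ) * α * Complex.I) =
          (Complex.exp (Complex.I * α))⁻¹ ^ m := by
        rw [← hw, ← Complex.exp_nat_mul]
        congr 1
        have : (n : ℂ) = (m : ℂ) := by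
          rw [show ((m:ℂ)) = ((m:ℤ):ℂ) by push_cast; ring, hm]
        rw [this]; ring
      unfold hfun Mfun
      rw [exp_two, hm', hw]
      rw [show q = -(((p+1:ℕ)):ℤ) by push_cast; omega]
      rw [show -(((p+1:ℕ)):ℤ) + 1 = -((p:ℕ):ℤ) by push_cast; ring]
      rw [zpow_neg, zpow_neg, zpow_natCast, zpow_natCast]
      have h1 := hz α; have h2 := hD α; have h3 := hA α
      rw [show (Complex.exp (Complex.I * α))⁻¹^2+(κ:ℂ) = (1 + (κ:ℂ)*Complex.exp (Complex.I * α)^2) / Complex.exp (Complex.I * α)^2 by field_simp,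
        show 1+(κ:ℂ)*(Complex.exp (Complex.I * α))⁻¹^2 = (Complex.exp (Complex.I * α)^2+(κ:ℂ)) / Complex.exp (Complex.I * α)^2 by field_simp]
      generalize hDg : 1 + (κ:ℂ) * Complex.exp (Complex.I * α)^2 = D at *
      generalize hAg : Complex.exp (Complex.I * α)^2 + (κ:ℂ) = A at *
      rw [div_pow, div_pow, inv_div, inv_div, div_pow, div_pow, ← pow_mul, ← pow_mul, inv_pow, inv_pow,
        pow_succ D, pow_succ A]
      field_simp
      linear_combination (-(Complex.exp (Complex.I * α)^2*Complex.exp (Complex.I * α)^m*Complex.exp (Complex.I * α)^(p*2))) * hDg +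
        (κ:ℂ) * (Complex.exp (Complex.I * α)^2*Complex.exp (Complex.I * α)^m*Complex.exp (Complex.I * α)^(p*2)) * hAg
    rw [intervalIntegral.integral_congr (fun α _ => hpt α),
      intervalIntegral.integral_const_mul, key_integral' κ hκa p m, mul_zero]
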